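/- Let p, m ≥ 1 be natural numbers and q_1,…,q_m integers each coprime to p. For every k ∈ {0,…,p−1}, n ∈ ℕ and N ⊆ M with N̄ = M ∖ N, the cardinality of Ω_N(k+np) equals Σ_{t=0}^{m−1} binom(n−t+|N̄|−1, m−1) · γ(N̄, k+tp), where binom(a,b) is the binomial coefficient 'a choose b', understood to be 0 whenever a < b or a < 0 (with a = n−t+|N̄|−1 computed in ℤ). -/

import Mathlib

/-- `OmegaSet p q U k` is the set `Ω(U,k)` of integer vectors supported on `U`
satisfying the congruence `∑ i ∈ U, q i * x i ≡ 0 (mod p)` with 1-norm `k`. -/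
def OmegaSet (p : ℕ) {m : ℕ} (q : Fin m → ℤ) (U : Finset (Fin m)) (k : ℕ) :
    Set (Fin m → ℤ) :=
  {x | (∀ i, i ∉ U → x i = 0) ∧ (p : ℤ) ∣ ∑ i ∈ U, q i * x i ∧
    ∑ i ∈ U, (x i).natAbs = k}

/-- `CSet p q U k` is the set `C(U,k)` of points of `Ω(U,k)` with all coordinates
of absolute value less than `p`. -/
def CSet (p : ℕ) {m : ℕ} (q : Fin m → ℤ) (U : Finset (Fin m)) (k : ℕ) :
    Set (Fin m → ℤ) :=
  {x ∈ OmegaSet p q U k | ∀ i ∈ U, |x i| < (p : ℤ)}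

/-- `OmegaN p q N k n` is the set `Ω_N(k+np)` of points of `Ω(M,k+np)` whose
coordinate `x i` is a negative multiple of `p` exactly when `i ∈ N`. -/
def OmegaN (p : ℕ) {m : ℕ} (q : Fin m → ℤ) (N : Finset (Fin m)) (k n : ℕ) :
    Set (Fin m → ℤ) :=
  {x ∈ OmegaSet p q Finset.univ (k + n * p) |
    ∀ i, (x i < 0 ∧ (p : ℤ) ∣ x i) ↔ i ∈ N}

/-- The signed reduction `x̄` of an integer modulo `p`:
`x mod p` if `x ≥ 0` and `(x mod p) - p` if `x < 0`. -/
def sred (p : ℕ) (x : ℤ) : ℤ := if 0 ≤ x then x % (p : ℤ) else x % (p : ℤ) - p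

/-- Binomial coefficient `a choose b` with upper argument in `ℤ`,
equal to `0` when `a < 0` (and, via `Nat.choose`, when `a < b`). -/
def ibinom (a : ℤ) (b : ℕ) : ℕ := if 0 ≤ a then a.toNat.choose b else 0

/-- quotient companion of `sred`. -/
def sw (p : ℕ) (x : ℤ) : ℤ := if 0 ≤ x then x / (p : ℤ) else x / (p : ℤ) + 1

lemma sred_add_sw (p : ℕ) (x : ℤ) : sred p x + p * sw p x = x := by
  unfold sred sw
  split <;> [skip; skip] <;>
  · have := Int.emod_add_mul_ediv x (p : ℤ)
    ring_nf
    ring_nf at this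
    linarith

lemma sw_nonneg (p : ℕ) {x : ℤ} (hx : 0 ≤ x) : 0 ≤ sw p x := by
  unfold sw; rw [if_pos hx]; exact Int.ediv_nonneg hx (by positivity)

lemma sw_nonpos (p : ℕ) (hp : 0 < p) {x : ℤ} (hx : x < 0) : sw p x ≤ 0 := by
  unfold sw; rw [if_neg (by omega)]
  have : x / (p : ℤ) < 0 := Int.ediv_neg_of_neg_of_pos hx (by exact_mod_cast hp)
  omega

lemma sred_nonneg (p : ℕ) (hp : 0 < p) {x : ℤ} (hx : 0 ≤ x) : 0 ≤ sred p x := by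
  unfold sred; rw [if_pos hx]; exact Int.emod_nonneg x (by positivity)

lemma sred_lt (p : ℕ) (hp : 0 < p) (x : ℤ) : sred p x < p := by
  unfold sred
  have := Int.emod_lt_of_pos x (b := (p:ℤ)) (by exact_mod_cast hp)
  split <;> omega

lemma sred_neg (p : ℕ) (hp : 0 < p) {x : ℤ} (hx : x < 0) : sred p x < 0 := by
  unfold sred; rw [if_neg (by omega)]
  have := Int.emod_lt_of_pos x (b := (p:ℤ)) (by exact_mod_cast hp)
  omega

lemma sred_ge (p : ℕ) (hp : 0 < p) (x : ℤ) : -(p:ℤ) ≤ sred p x := by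
  unfold sred
  have := Int.emod_nonneg x (b := (p:ℤ)) (by positivity)
  split <;> omega

lemma natAbs_eq_sred (p : ℕ) (hp : 0 < p) (x : ℤ) :
    x.natAbs = (sred p x).natAbs + p * (sw p x).natAbs := by
  have h := sred_add_sw p x
  rcases le_or_gt 0 x with hx | hx
  · have h1 := sred_nonneg p hp hx
    have h2 := sw_nonneg p hx
    zify
    rw [abs_of_nonneg hx, abs_of_nonneg h1, abs_of_nonneg h2]
    linarith
  · have h1 := sred_neg p hp hx
    have h2 := sw_nonpos p hp hx
    zify
    rw [abs_of_neg hx, abs_of_neg h1, abs_of_nonpos h2]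
    linarith

lemma dvd_sub_sred (p : ℕ) (x : ℤ) : (p:ℤ) ∣ x - sred p x := by
  have h := sred_add_sw p x
  exact ⟨sw p x, by linarith⟩

/-- if `x < 0` and `p ∣ x` then `sred p x = -p`. -/
lemma sred_eq_neg_p (p : ℕ) (hp : 0 < p) {x : ℤ} (hx : x < 0) (hd : (p:ℤ) ∣ x) :
    sred p x = -p := by
  unfold sred; rw [if_neg (by omega)]
  have : x % (p:ℤ) = 0 := Int.emod_eq_zero_of_dvd hd
  omega

lemma abs_sred_lt (p : ℕ) (hp : 0 < p) {x : ℤ} (h : ¬(x < 0 ∧ (p:ℤ) ∣ x)) :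
    |sred p x| < p := by
  rcases le_or_gt 0 x with hx | hx
  · rw [abs_of_nonneg (sred_nonneg p hp hx)]; exact sred_lt p hp x
  · have h1 := sred_neg p hp hx
    have h2 := sred_ge p hp x
    rw [abs_of_neg h1]
    rcases h2.lt_or_eq with h3 | h3
    · omega
    · exfalso; apply h
      refine ⟨hx, ?_⟩
      have h4 := dvd_sub_sred p x
      rw [← h3, sub_neg_eq_add] at h4
      obtain ⟨c, hc⟩ := h4
      exact ⟨c - 1, by linarith⟩
      
lemma sred_dvd_of_eq_negp (p : ℕ) (hp : 0 < p) {x : ℤ} (hx : x < 0) (h : sred p x = -p) :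
    (p:ℤ) ∣ x := by
  have := dvd_sub_sred p x
  rw [h] at this
  obtain ⟨c, hc⟩ := this
  exact ⟨c - 1, by linarith⟩

/-- reconstruction: `sred` of `c + p*s` for `0 ≤ c < p`, `0 ≤ s`. -/
lemma sred_reconstruct_nonneg (p : ℕ) (hp : 0 < p) {c s : ℤ} (hc0 : 0 ≤ c) (hcp : c < p)
    (hs : 0 ≤ s) : sred p (c + p * s) = c ∧ sw p (c + p * s) = s := by
  have hx : 0 ≤ c + p * s := by positivity
  have h1 : sred p (c + p * s) = c := by
    unfold sred
    rw [if_pos hx, Int.add_mul_emod_self_left, Int.emod_eq_of_lt hc0 hcp]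
  refine ⟨h1, ?_⟩
  have h := sred_add_sw p (c + p * s)
  rw [h1] at h
  have hpne : (p:ℤ) ≠ 0 := by positivity
  have : (p:ℤ) * sw p (c + p * s) = p * s := by linarith
  exact mul_left_cancel₀ hpne this

lemma sred_reconstruct_neg (p : ℕ) (hp : 0 < p) {c s : ℤ} (hc0 : c < 0) (hcp : -(p:ℤ) < c)
    (hs : 0 ≤ s) : sred p (c - p * s) = c ∧ sw p (c - p * s) = -s := by
  have hx : c - p * s < 0 := by nlinarith
  have h1 : sred p (c - p * s) = c := by
    unfold sred
    rw [if_neg (by omega)]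
    have : (c - p * s) % p = c % p := by
      have : c - (p:ℤ) * s = c + p * (-s) := by ring
      rw [this, Int.add_mul_emod_self_left]
    rw [this]
    have h2 : c % (p:ℤ) = (c + p) % p := by
      conv_rhs => rw [show c + (p:ℤ) = c + p * 1 by ring, Int.add_mul_emod_self_left]
    rw [h2, Int.emod_eq_of_lt (by omega) (by omega)]
    ring
  refine ⟨h1, ?_⟩
  have h := sred_add_sw p (c - p * s)
  rw [h1] at h
  have hpne : (p:ℤ) ≠ 0 := by positivity
  have : (p:ℤ) * sw p (c - p * s) = p * (-s) := by linarith
  exact mul_left_cancel₀ hpne this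

----------------------------------------------------------------

def cOf (p : ℕ) {m : ℕ} (N : Finset (Fin m)) (x : Fin m → ℤ) : Fin m → ℤ :=
  fun i => if i ∈ N then 0 else sred p (x i)

def sOf (p : ℕ) {m : ℕ} (x : Fin m → ℤ) : Fin m → ℕ := fun i => (sw p (x i)).natAbs

def Fmap (p : ℕ) {m : ℕ} (N : Finset (Fin m)) (c : Fin m → ℤ) (s : Fin m → ℕ) : Fin m → ℤ :=
  fun i => if i ∈ N then -(p * (s i + 1)) else if 0 ≤ c i then c i + p * s i else c i - p * s i

def SumSet {m : ℕ} (N : Finset (Fin m)) (t n : ℕ) : Set (Fin m → ℕ) :=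
  {s | N.card + t + ∑ i, s i = n}

def OmegaT (p : ℕ) {m : ℕ} (q : Fin m → ℤ) (N : Finset (Fin m)) (k n t : ℕ) :
    Set (Fin m → ℤ) :=
  {x ∈ OmegaN p q N k n | ∑ i, (cOf p N x i).natAbs = k + t * p}

section Main
variable (p : ℕ) {m : ℕ} (q : Fin m → ℤ) (N : Finset (Fin m)) (k n t : ℕ)

lemma mem_OmegaN {x : Fin m → ℤ} :
    x ∈ OmegaN p q N k n ↔
      ((∀ i, i ∉ (Finset.univ : Finset (Fin m)) → x i = 0) ∧
        (p : ℤ) ∣ ∑ i, q i * x i ∧ ∑ i, (x i).natAbs = k + n * p) ∧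
      ∀ i, (x i < 0 ∧ (p : ℤ) ∣ x i) ↔ i ∈ N := Iff.rfl

lemma mem_CSet {U : Finset (Fin m)} {j : ℕ} {x : Fin m → ℤ} :
    x ∈ CSet p q U j ↔
      ((∀ i, i ∉ U → x i = 0) ∧ (p : ℤ) ∣ ∑ i ∈ U, q i * x i ∧
        ∑ i ∈ U, (x i).natAbs = j) ∧ ∀ i ∈ U, |x i| < (p : ℤ) := Iff.rfl

variable {p q N k n t}

/-- per-coordinate norm decomposition for `x ∈ Ω_N`. -/
lemma fwd_natAbs (hp : 0 < p) {x : Fin m → ℤ}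
    (hN : ∀ i, (x i < 0 ∧ (p : ℤ) ∣ x i) ↔ i ∈ N) (i : Fin m) :
    (x i).natAbs = (cOf p N x i).natAbs + p * sOf p x i + (if i ∈ N then p else 0) := by
  unfold cOf sOf
  by_cases hi : i ∈ N
  · obtain ⟨hneg, hdvd⟩ := (hN i).mpr hi
    have h1 : sred p (x i) = -p := sred_eq_neg_p p hp hneg hdvd
    have h2 := natAbs_eq_sred p hp (x i)
    rw [h1] at h2
    simp only [hi, if_pos]
    simp only [Int.natAbs_neg, Int.natAbs_natCast] at h2
    omega
  · simp only [hi, if_neg, if_false, not_false_iff]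
    have h2 := natAbs_eq_sred p hp (x i)
    omega

lemma fwd_reconstruct (hp : 0 < p) {x : Fin m → ℤ}
    (hN : ∀ i, (x i < 0 ∧ (p : ℤ) ∣ x i) ↔ i ∈ N) (i : Fin m) :
    Fmap p N (cOf p N x) (sOf p x) i = x i := by
  unfold Fmap cOf sOf
  have hspec := sred_add_sw p (x i)
  by_cases hi : i ∈ N
  · simp only [hi, if_pos]
    obtain ⟨hneg, hdvd⟩ := (hN i).mpr hi
    have h1 : sred p (x i) = -p := sred_eq_neg_p p hp hneg hdvd
    have h2 : sw p (x i) ≤ 0 := sw_nonpos p hp hneg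
    have h3 : ((sw p (x i)).natAbs : ℤ) = -(sw p (x i)) := by omega
    push_cast [h3]
    rw [h1] at hspec
    linarith
  · simp only [hi, if_neg, if_false, not_false_iff]
    rcases le_or_gt 0 (x i) with hx | hx
    · have h1 : 0 ≤ sred p (x i) := sred_nonneg p hp hx
      have h2 : 0 ≤ sw p (x i) := sw_nonneg p hx
      rw [if_pos h1]
      have h3 : ((sw p (x i)).natAbs : ℤ) = sw p (x i) := by omega
      push_cast [h3]
      linarith
    · have h1 : sred p (x i) < 0 := sred_neg p hp hx
      have h2 : sw p (x i) ≤ 0 := sw_nonpos p hp hx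
      rw [if_neg (by omega)]
      have h3 : ((sw p (x i)).natAbs : ℤ) = -(sw p (x i)) := by omega
      push_cast [h3]
      linarith

/-- the total norm identity for `x ∈ Ω_N`. -/
lemma fwd_sum (hp : 0 < p) {x : Fin m → ℤ} (hx : x ∈ OmegaN p q N k n) :
    (∑ i, (cOf p N x i).natAbs) + p * (∑ i, sOf p x i) + p * N.card = k + n * p := by
  obtain ⟨⟨-, -, hnorm⟩, hN⟩ := hx
  calc (∑ i, (cOf p N x i).natAbs) + p * (∑ i, sOf p x i) + p * N.card
      = ∑ i, ((cOf p N x i).natAbs + p * sOf p x i + (if i ∈ N then p else 0)) := by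
        rw [Finset.sum_add_distrib, Finset.sum_add_distrib, Finset.mul_sum]
        congr 1
        rw [Finset.sum_ite_mem, Finset.univ_inter, Finset.sum_const, smul_eq_mul, mul_comm]
    _ = ∑ i, (x i).natAbs := by
        exact Finset.sum_congr rfl fun i _ => (fwd_natAbs hp hN i).symm
    _ = k + n * p := hnorm

/-- each `|c i| ≤ p - 1`, summed. -/
lemma fwd_sum_le (hp : 0 < p) (hm : 0 < m) {x : Fin m → ℤ} (hx : x ∈ OmegaN p q N k n) :
    (∑ i, (cOf p N x i).natAbs) + m ≤ m * p := by
  obtain ⟨-, hN⟩ := hx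
  have h : ∀ i : Fin m, (cOf p N x i).natAbs + 1 ≤ p := by
    intro i
    unfold cOf
    by_cases hi : i ∈ N
    · simp [hi]; omega
    · simp only [hi, if_neg, if_false, not_false_iff]
      have h1 := abs_sred_lt p hp (x := x i) (by rw [hN i]; exact hi)
      have h2 : ((sred p (x i)).natAbs : ℤ) < p := by rwa [Int.natCast_natAbs]
      omega
  calc (∑ i, (cOf p N x i).natAbs) + m = ∑ i : Fin m, ((cOf p N x i).natAbs + 1) := by
        rw [Finset.sum_add_distrib]; simp [Finset.card_univ]
    _ ≤ ∑ _i : Fin m, p := Finset.sum_le_sum fun i _ => h i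
    _ = m * p := by simp [Finset.card_univ, mul_comm]

/-- existence of the level `t`. -/
lemma fwd_exists_t (hp : 0 < p) (hm : 0 < m) (hk : k < p) {x : Fin m → ℤ}
    (hx : x ∈ OmegaN p q N k n) :
    ∃ t, t < m ∧ ∑ i, (cOf p N x i).natAbs = k + t * p := by
  have hs := fwd_sum hp hx
  have hle := fwd_sum_le hp hm hx
  set S := ∑ i, (cOf p N x i).natAbs with hS
  set B := (∑ i, sOf p x i) + N.card with hB
  have hs' : S + p * B = k + n * p := by rw [hB, Nat.mul_add]; omega
  have hBn : B ≤ n := by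
    by_contra hc
    push_neg at hc
    have : p * (n + 1) ≤ p * B := Nat.mul_le_mul_left p hc
    have h2 : n * p + p ≤ p * B := by rw [Nat.mul_add, mul_comm] at this; omega
    omega
  have key : (n - B) * p + B * p = n * p := by rw [← Nat.add_mul]; congr 1; omega
  have hcomm : p * B = B * p := mul_comm p B
  have hSeq : S = k + (n - B) * p := by omega
  refine ⟨n - B, ?_, hSeq⟩
  have hlt : (n - B) * p < m * p := by omega
  exact lt_of_mul_lt_mul_right hlt (Nat.zero_le p)


lemma fwd_dvd_diff (hp : 0 < p) {x : Fin m → ℤ}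
    (hN : ∀ i, (x i < 0 ∧ (p : ℤ) ∣ x i) ↔ i ∈ N) (i : Fin m) :
    (p:ℤ) ∣ x i - cOf p N x i := by
  unfold cOf
  by_cases hi : i ∈ N
  · rw [if_pos hi, sub_zero]; exact ((hN i).mpr hi).2
  · rw [if_neg hi]; exact dvd_sub_sred p (x i)

lemma fwd_mem_CSet (hp : 0 < p) {x : Fin m → ℤ} (hx : x ∈ OmegaT p q N k n t) :
    cOf p N x ∈ CSet p q Nᶜ (k + t * p) := by
  obtain ⟨⟨⟨-, hdvd, -⟩, hN⟩, hsum⟩ := hx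
  refine ⟨⟨?_, ?_, ?_⟩, ?_⟩
  · intro i hi
    rw [Finset.notMem_compl] at hi
    simp [cOf, hi]
  · have h1 : ∑ i ∈ Nᶜ, q i * cOf p N x i = ∑ i, q i * cOf p N x i := by
      refine Finset.sum_subset (Finset.subset_univ _) ?_
      intro i _ hi
      rw [Finset.notMem_compl] at hi
      simp [cOf, hi]
    rw [h1]
    have h2 : ∑ i, q i * cOf p N x i
        = (∑ i, q i * x i) - ∑ i, q i * (x i - cOf p N x i) := by
      rw [← Finset.sum_sub_distrib]
      exact Finset.sum_congr rfl fun i _ => by ring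
    rw [h2]
    exact dvd_sub hdvd (Finset.dvd_sum fun i _ => (fwd_dvd_diff hp hN i).mul_left _)
  · have h1 : ∑ i ∈ Nᶜ, (cOf p N x i).natAbs = ∑ i, (cOf p N x i).natAbs := by
      refine Finset.sum_subset (Finset.subset_univ _) ?_
      intro i _ hi
      rw [Finset.notMem_compl] at hi
      simp [cOf, hi]
    rw [h1]; exact hsum
  · intro i hi
    rw [Finset.mem_compl] at hi
    simp only [cOf, if_neg hi]
    exact abs_sred_lt p hp (by rw [hN i]; exact hi)

lemma fwd_mem_SumSet (hp : 0 < p) {x : Fin m → ℤ} (hx : x ∈ OmegaT p q N k n t) :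
    sOf p x ∈ SumSet N t n := by
  have h1 := fwd_sum hp hx.1
  have h2 := hx.2
  have key : p * (N.card + t + ∑ i, sOf p x i) = p * n := by
    have e1 : p * (N.card + t + ∑ i, sOf p x i)
        = p * N.card + p * t + p * ∑ i, sOf p x i := by ring
    have e2 : t * p = p * t := mul_comm _ _
    have e3 : n * p = p * n := mul_comm _ _
    omega
  exact Nat.eq_of_mul_eq_mul_left hp key

lemma bwd_coord (hp : 0 < p) {c : Fin m → ℤ} {s : Fin m → ℕ}
    (hczero : ∀ i ∈ N, c i = 0) (habs : ∀ i, i ∉ N → |c i| < p) (i : Fin m) :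
    cOf p N (Fmap p N c s) i = c i ∧ sOf p (Fmap p N c s) i = s i ∧
    ((Fmap p N c s i < 0 ∧ (p:ℤ) ∣ Fmap p N c s i) ↔ i ∈ N) ∧
    (Fmap p N c s i).natAbs = (c i).natAbs + p * s i + if i ∈ N then p else 0 := by
  have hpz : (0:ℤ) < p := by exact_mod_cast hp
  by_cases hi : i ∈ N
  · have hx : Fmap p N c s i = -((p * s i + p : ℕ) : ℤ) := by
      simp only [Fmap, if_pos hi]; push_cast; ring
    have hneg : Fmap p N c s i < 0 := by rw [hx]; push_cast; nlinarith
    have hdvd : (p:ℤ) ∣ Fmap p N c s i := by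
      rw [hx]; push_cast; exact ⟨-(s i + 1), by ring⟩
    have hsred : sred p (Fmap p N c s i) = -p := sred_eq_neg_p p hp hneg hdvd
    have hsw : sw p (Fmap p N c s i) = -(s i : ℤ) := by
      have h := sred_add_sw p (Fmap p N c s i)
      rw [hsred] at h
      have hx' : Fmap p N c s i = -((p:ℤ) * s i + p) := by rw [hx]; push_cast; ring
      have hkey : (p:ℤ) * sw p (Fmap p N c s i) = p * (-(s i:ℤ)) := by
        rw [hx'] at h
        rw [hx']
        linarith
      exact mul_left_cancel₀ (by positivity) hkey
    refine ⟨by simp [cOf, hi, (hczero i hi).symm], ?_, ?_, ?_⟩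
    · simp [sOf, hsw]
    · simp only [hi, iff_true]; exact ⟨hneg, hdvd⟩
    · rw [hx, Int.natAbs_neg, Int.natAbs_natCast, hczero i hi, if_pos hi]
      simp
  · have hci := habs i hi
    obtain ⟨hcl, hcr⟩ := abs_lt.mp hci
    rcases le_or_gt 0 (c i) with hc0 | hc0
    · have hx : Fmap p N c s i = c i + p * s i := by simp [Fmap, hi, hc0]
      obtain ⟨hsred, hsw⟩ := sred_reconstruct_nonneg p hp hc0 (by omega) (s := (s i : ℤ))
        (by positivity)
      have hxnn : 0 ≤ Fmap p N c s i := by rw [hx]; positivity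
      refine ⟨by simp [cOf, hi]; rw [hx]; exact hsred, ?_, ?_, ?_⟩
      · simp only [sOf, hx, hsw]; simp
      · simp only [hi, iff_false]; rintro ⟨h1, -⟩; exact absurd h1 (not_lt.mpr hxnn)
      · have h1 : ((c i).natAbs : ℤ) = c i := by omega
        have h2 : Fmap p N c s i = (((c i).natAbs + p * s i : ℕ) : ℤ) := by
          rw [hx]; push_cast [h1]; ring
        rw [h2, Int.natAbs_natCast, if_neg hi]
        omega
    · have hx : Fmap p N c s i = c i - p * s i := by simp [Fmap, hi, not_le.mpr hc0]
      obtain ⟨hsred, hsw⟩ := sred_reconstruct_neg p hp hc0 (by omega) (s := (s i : ℤ))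
        (by positivity)
      have hxneg : Fmap p N c s i < 0 := by
        rw [hx]
        have : 0 ≤ (p:ℤ) * s i := by positivity
        omega
      have hnd : ¬ (p:ℤ) ∣ Fmap p N c s i := by
        intro hd
        have := sred_eq_neg_p p hp hxneg hd
        rw [hx, hsred] at this
        omega
      refine ⟨by simp [cOf, hi]; rw [hx]; exact hsred, ?_, ?_, ?_⟩
      · simp only [sOf, hx, hsw]; simp
      · simp only [hi, iff_false]; rintro ⟨-, h2⟩; exact hnd h2
      · have h1 : ((c i).natAbs : ℤ) = -(c i) := by omega
        have h2 : Fmap p N c s i = -((((c i).natAbs + p * s i : ℕ)) : ℤ) := by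
          rw [hx]; push_cast [h1]; ring
        rw [h2, Int.natAbs_neg, Int.natAbs_natCast, if_neg hi]
        omega


lemma bwd_mem (hp : 0 < p) {c : Fin m → ℤ} {s : Fin m → ℕ}
    (hc : c ∈ CSet p q Nᶜ (k + t * p)) (hs : s ∈ SumSet N t n) :
    Fmap p N c s ∈ OmegaT p q N k n t ∧ cOf p N (Fmap p N c s) = c ∧
      sOf p (Fmap p N c s) = s := by
  obtain ⟨⟨hsupp, hdvd, hnorm⟩, hlt⟩ := hc
  have hczero : ∀ i ∈ N, c i = 0 := fun i hi => hsupp i (Finset.notMem_compl.mpr hi)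
  have habs : ∀ i, i ∉ N → |c i| < p := fun i hi => hlt i (Finset.mem_compl.mpr hi)
  have key := fun i => bwd_coord (s := s) hp hczero habs i
  have hcOf : cOf p N (Fmap p N c s) = c := funext fun i => (key i).1
  have hsOf : sOf p (Fmap p N c s) = s := funext fun i => (key i).2.1
  have hsums : N.card + t + ∑ i, s i = n := hs
  have hsum_univ : ∑ i, (c i).natAbs = k + t * p := by
    rw [← hnorm]
    refine (Finset.sum_subset (Finset.subset_univ _) ?_).symm
    intro i _ hi
    rw [Finset.notMem_compl] at hi
    simp [hczero i hi]
  refine ⟨⟨⟨⟨fun i hi => absurd (Finset.mem_univ i) hi, ?_, ?_⟩, fun i => (key i).2.2.1⟩, ?_⟩,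
    hcOf, hsOf⟩
  · -- divisibility
    have hdiff : ∀ i, (p:ℤ) ∣ Fmap p N c s i - c i := by
      intro i
      by_cases hi : i ∈ N
      · simp only [Fmap, if_pos hi, hczero i hi, sub_zero]
        exact ⟨-((s i : ℤ) + 1), by push_cast; ring⟩
      · simp only [Fmap, if_neg hi]
        split
        · exact ⟨(s i : ℤ), by ring⟩
        · exact ⟨-(s i : ℤ), by ring⟩
    have h1 : ∑ i, q i * Fmap p N c s i
        = (∑ i ∈ Nᶜ, q i * c i) + ∑ i, q i * (Fmap p N c s i - c i) := by
      have h2 : ∑ i ∈ Nᶜ, q i * c i = ∑ i, q i * c i := by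
        refine Finset.sum_subset (Finset.subset_univ _) ?_
        intro i _ hi
        rw [Finset.notMem_compl] at hi
        simp [hczero i hi]
      rw [h2, ← Finset.sum_add_distrib]
      exact Finset.sum_congr rfl fun i _ => by ring
    rw [h1]
    exact dvd_add hdvd (Finset.dvd_sum fun i _ => (hdiff i).mul_left _)
  · -- norm
    have h1 : ∑ i, (Fmap p N c s i).natAbs
        = (∑ i, (c i).natAbs) + p * (∑ i, s i) + p * N.card := by
      rw [Finset.mul_sum]
      calc ∑ i, (Fmap p N c s i).natAbs
          = ∑ i, ((c i).natAbs + p * s i + if i ∈ N then p else 0) :=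
            Finset.sum_congr rfl fun i _ => (key i).2.2.2
        _ = (∑ i, (c i).natAbs) + (∑ i, p * s i) + p * N.card := by
            rw [Finset.sum_add_distrib, Finset.sum_add_distrib]
            congr 1
            rw [Finset.sum_ite_mem, Finset.univ_inter, Finset.sum_const, smul_eq_mul, mul_comm]
    rw [h1, hsum_univ]
    have e1 : n * p = (N.card + t + ∑ i, s i) * p := by rw [hsums]
    have e2 : (N.card + t + ∑ i, s i) * p
        = p * N.card + t * p + p * ∑ i, s i := by ring
    omega
  · -- OmegaT level
    have h2 : ∑ i, (cOf p N (Fmap p N c s) i).natAbs = ∑ i, (c i).natAbs := by rw [hcOf]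
    rw [h2, hsum_univ]

lemma omegaT_ncard (hp : 0 < p) :
    (OmegaT p q N k n t).ncard
      = (CSet p q Nᶜ (k + t * p)).ncard * Nat.card (SumSet N t n) := by
  have e : (OmegaT p q N k n t) ≃ (CSet p q Nᶜ (k + t * p)) × (SumSet N t n) := {
    toFun := fun x => (⟨cOf p N x.1, fwd_mem_CSet hp x.2⟩, ⟨sOf p x.1, fwd_mem_SumSet hp x.2⟩)
    invFun := fun cs => ⟨Fmap p N cs.1.1 cs.2.1, (bwd_mem hp cs.1.2 cs.2.2).1⟩
    left_inv := fun x => Subtype.ext (funext fun i => fwd_reconstruct hp x.2.1.2 i)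
    right_inv := fun cs => by
      obtain ⟨⟨c, hc⟩, ⟨s, hs⟩⟩ := cs
      have h := bwd_mem hp hc hs
      exact Prod.ext (Subtype.ext h.2.1) (Subtype.ext h.2.2) }
  rw [← Nat.card_coe_set_eq, ← Nat.card_coe_set_eq, Nat.card_congr e, Nat.card_prod]

lemma omegaN_finite : (OmegaN p q N k n).Finite := by
  apply Set.Finite.subset
    (Set.Finite.pi (fun i : Fin m => Set.finite_Icc (-(k + n * p : ℤ)) (k + n * p)))
  intro x hx
  obtain ⟨⟨-, -, hnorm⟩, -⟩ := hx
  intro i _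
  have h1 : (x i).natAbs ≤ k + n * p := by
    rw [← hnorm]
    exact Finset.single_le_sum (f := fun j => (x j).natAbs) (fun j _ => Nat.zero_le _)
      (Finset.mem_univ i)
  simp only [Set.mem_Icc]
  omega

end Main

lemma ibinom_eq_zero {a : ℤ} {b : ℕ} (h : a < (b:ℤ)) : ibinom a b = 0 := by
  unfold ibinom
  split
  · exact Nat.choose_eq_zero_of_lt (by omega)
  · rfl

def sumEquivSym (m D : ℕ) : {s : Fin m → ℕ // ∑ i, s i = D} ≃ Sym (Fin m) D where
  toFun s := ⟨∑ i, (s.1 i) • ({i} : Multiset (Fin m)), by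
    have hcard : Multiset.card (∑ i, (s.1 i) • ({i} : Multiset (Fin m)))
        = ∑ i, Multiset.card ((s.1 i) • ({i} : Multiset (Fin m))) :=
      map_sum (⟨⟨Multiset.card, Multiset.card_zero⟩, Multiset.card_add⟩ : Multiset (Fin m) →+ ℕ) _ _
    rw [hcard]
    simp only [Multiset.card_nsmul, Multiset.card_singleton, mul_one]
    exact s.2⟩
  invFun ms := ⟨fun i => ms.1.count i, by
    rw [Multiset.sum_count_eq_card (fun a _ => Finset.mem_univ a), ms.2]⟩
  left_inv s := Subtype.ext (funext fun j => by
    simp [Multiset.count_sum', Multiset.count_nsmul, Multiset.count_singleton])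
  right_inv ms := Subtype.ext (by
    refine Multiset.ext.mpr fun a => ?_
    simp [Multiset.count_sum', Multiset.count_nsmul, Multiset.count_singleton])

lemma sumset_card {m : ℕ} (hm : 0 < m) (N : Finset (Fin m)) (t n : ℕ) :
    Nat.card (SumSet N t n)
      = ibinom ((n : ℤ) - (t : ℤ) + (Nᶜ.card : ℤ) - 1) (m - 1) := by
  have hNm : N.card ≤ m := by
    simpa using Finset.card_le_card (Finset.subset_univ N)
  have hcompl : (Nᶜ.card : ℤ) = (m : ℤ) - N.card := by
    rw [Finset.card_compl]
    simp [Nat.cast_sub hNm]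
  rcases lt_or_ge n (N.card + t) with hlt | hle
  · have hempty : SumSet N t n = (∅ : Set (Fin m → ℕ)) := by
      ext s
      simp only [SumSet, Set.mem_setOf_eq, Set.mem_empty_iff_false, iff_false]
      omega
    rw [hempty]
    rw [Nat.card_of_isEmpty]
    symm
    apply ibinom_eq_zero
    rw [hcompl]
    push_cast [Nat.cast_sub hm]
    omega
  · set D := n - (N.card + t) with hD
    have e1 : (SumSet N t n) ≃ {s : Fin m → ℕ // ∑ i, s i = D} :=
      Equiv.subtypeEquivRight (fun s => by
        simp only [SumSet, Set.mem_setOf_eq]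
        omega)
    rw [Nat.card_congr (e1.trans (sumEquivSym m D)), Nat.card_eq_fintype_card,
      Sym.card_sym_eq_multichoose, Nat.multichoose_eq, Fintype.card_fin]
    have harg : (n : ℤ) - (t : ℤ) + (Nᶜ.card : ℤ) - 1 = ((D + m - 1 : ℕ) : ℤ) := by
      rw [hcompl]
      push_cast [Nat.cast_sub (by omega : 1 ≤ D + m)]
      omega
    rw [harg]
    unfold ibinom
    rw [if_pos (by positivity)]
    rw [Int.toNat_natCast]
    have hsym : (D + m - 1).choose (m - 1) = (D + m - 1).choose D := by
      have : m - 1 = (D + m - 1) - D := by omega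
      rw [this]
      exact Nat.choose_symm (by omega)
    rw [hsym]
    congr 1
    omega



/-- **Proposition.** `|Ω_N(k+np)| = ∑_{t=0}^{m-1} binom(n-t+|N̄|-1, m-1) ⬝ γ(N̄, k+tp)`. -/
theorem omegaN_card (p m : ℕ) (hp : 1 ≤ p) (hm : 1 ≤ m) (q : Fin m → ℤ)
    (hq : ∀ i, IsCoprime (q i) (p : ℤ)) (k n : ℕ) (hk : k < p)
    (N : Finset (Fin m)) :
    (OmegaN p q N k n).ncard =
      ∑ t ∈ Finset.range m, ibinom ((n : ℤ) - (t : ℤ) + (Nᶜ.card : ℤ) - 1) (m - 1) *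
        (CSet p q Nᶜ (k + t * p)).ncard := by
  classical
  have hp' : 0 < p := hp
  have hm' : 0 < m := hm
  have hfin : (OmegaN p q N k n).Finite := omegaN_finite
  set F := hfin.toFinset with hF
  have hmemF : ∀ x, x ∈ F ↔ x ∈ OmegaN p q N k n := fun x => Set.Finite.mem_toFinset hfin
  set f : (Fin m → ℤ) → ℕ := fun x => ((∑ i, (cOf p N x i).natAbs) - k) / p with hf
  have hfval : ∀ x ∈ OmegaN p q N k n, ∀ t', (∑ i, (cOf p N x i).natAbs) = k + t' * p →
      f x = t' := by
    intro x _ t' hts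
    rw [hf]
    simp only
    rw [hts, Nat.add_sub_cancel_left, Nat.mul_div_cancel _ hp']
  have hrange : ∀ x ∈ F, f x ∈ Finset.range m := by
    intro x hx
    rw [hmemF] at hx
    obtain ⟨t', htm, hts⟩ := fwd_exists_t hp' hm' hk hx
    rw [Finset.mem_range, hfval x hx t' hts]
    exact htm
  have hsplit : F.card = ∑ t ∈ Finset.range m, (F.filter fun x => f x = t).card :=
    Finset.card_eq_sum_card_fiberwise hrange
  have hfilter : ∀ t, ((F.filter fun x => f x = t) : Set (Fin m → ℤ)) = OmegaT p q N k n t := by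
    intro t
    ext x
    simp only [Finset.coe_filter, Set.mem_setOf_eq, hmemF]
    constructor
    · rintro ⟨hx, hft⟩
      refine ⟨hx, ?_⟩
      obtain ⟨t', htm, hts⟩ := fwd_exists_t hp' hm' hk hx
      rw [hfval x hx t' hts] at hft
      rw [hts, hft]
    · rintro ⟨hx, hts⟩
      exact ⟨hx, hfval x hx t hts⟩
  calc (OmegaN p q N k n).ncard = F.card := by
        rw [← Set.Finite.coe_toFinset hfin, Set.ncard_coe_finset]
    _ = ∑ t ∈ Finset.range m, (F.filter fun x => f x = t).card := hsplit
    _ = ∑ t ∈ Finset.range m, ibinom ((n : ℤ) - (t : ℤ) + (Nᶜ.card : ℤ) - 1) (m - 1) *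
        (CSet p q Nᶜ (k + t * p)).ncard := by
      refine Finset.sum_congr rfl fun t _ => ?_
      rw [← Set.ncard_coe_finset, hfilter t, omegaT_ncard hp', sumset_card hm', mul_comm]
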